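/- Let μ : [0,∞) → ℝ be continuously differentiable with μ(s) ≥ ε₁ > 0 and μ(s) + 2sμ'(s) ≥ ε₂ > 0 for all s ≥ 0, and set ε = min{ε₁, ε₂}. Then for all n×n real matrices A, B: ⟨μ(|A|²)A - μ(|B|²)B, A - B⟩ ≥ ε|A - B|², where ⟨·,·⟩ and |·| are the Frobenius inner product and norm. -/

import Mathlib

open BigOperators

/-- Frobenius inner product of square real matrices. -/
noncomputable def ipF {n : ℕ} (A B : Matrix (Fin n) (Fin n) ℝ) : ℝ :=
  ∑ i, ∑ j, A i j * B i j

/-- Frobenius norm of a square real matrix. -/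
noncomputable def nF {n : ℕ} (A : Matrix (Fin n) (Fin n) ℝ) : ℝ :=
  Real.sqrt (ipF A A)

lemma ipF_comm {n : ℕ} (A B : Matrix (Fin n) (Fin n) ℝ) : ipF A B = ipF B A := by
  simp [ipF, mul_comm]

lemma ipF_self_nonneg {n : ℕ} (A : Matrix (Fin n) (Fin n) ℝ) : 0 ≤ ipF A A :=
  Finset.sum_nonneg fun i _ => Finset.sum_nonneg fun j _ => mul_self_nonneg _

lemma ipF_add_left {n : ℕ} (A B C : Matrix (Fin n) (Fin n) ℝ) :
    ipF (A + B) C = ipF A C + ipF B C := by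
  simp [ipF, Matrix.add_apply, add_mul, Finset.sum_add_distrib]

lemma ipF_smul_left {n : ℕ} (c : ℝ) (A B : Matrix (Fin n) (Fin n) ℝ) :
    ipF (c • A) B = c * ipF A B := by
  simp [ipF, Matrix.smul_apply, smul_eq_mul, Finset.mul_sum, mul_assoc]

lemma ipF_add_right {n : ℕ} (A B C : Matrix (Fin n) (Fin n) ℝ) :
    ipF A (B + C) = ipF A B + ipF A C := by
  rw [ipF_comm, ipF_add_left, ipF_comm B, ipF_comm C]

lemma ipF_smul_right {n : ℕ} (c : ℝ) (A B : Matrix (Fin n) (Fin n) ℝ) :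
    ipF A (c • B) = c * ipF A B := by
  rw [ipF_comm, ipF_smul_left, ipF_comm]

lemma ipF_sub_left {n : ℕ} (A B C : Matrix (Fin n) (Fin n) ℝ) :
    ipF (A - B) C = ipF A C - ipF B C := by
  simp [ipF, Matrix.sub_apply, sub_mul, Finset.sum_sub_distrib]

lemma nF_sq {n : ℕ} (A : Matrix (Fin n) (Fin n) ℝ) : nF A ^ 2 = ipF A A :=
  Real.sq_sqrt (ipF_self_nonneg A)

lemma ipF_sq_le {n : ℕ} (A B : Matrix (Fin n) (Fin n) ℝ) :
    (ipF A B) ^ 2 ≤ ipF A A * ipF B B := by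
  have h := Finset.sum_mul_sq_le_sq_mul_sq Finset.univ
      (fun p : Fin n × Fin n => A p.1 p.2) (fun p : Fin n × Fin n => B p.1 p.2)
  simpa [ipF, Fintype.sum_prod_type, sq] using h

/-- Strong monotonicity of `A ↦ μ(|A|²)A`:
`⟨μ(|A|²)A - μ(|B|²)B, A - B⟩ ≥ ε |A - B|²` with `ε = min{ε₁, ε₂}`. -/
theorem matrix_strong_monotonicity (n : ℕ) (μ μ' : ℝ → ℝ)
    (ε₁ ε₂ : ℝ) (hε₁ : 0 < ε₁) (hε₂ : 0 < ε₂)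
    (hder : ∀ s, 0 ≤ s → HasDerivAt μ (μ' s) s) (hcont : Continuous μ')
    (h1 : ∀ s, 0 ≤ s → ε₁ ≤ μ s)
    (h2 : ∀ s, 0 ≤ s → ε₂ ≤ μ s + 2 * s * μ' s)
    (A B : Matrix (Fin n) (Fin n) ℝ) :
    min ε₁ ε₂ * (nF (A - B)) ^ 2
      ≤ ipF (μ ((nF A) ^ 2) • A - μ ((nF B) ^ 2) • B) (A - B) := by
  set E := A - B with hE
  set nBB := ipF B B with hnBB
  set nBE := ipF B E with hnBE
  set nEE := ipF E E with hnEE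
  have hEnn : 0 ≤ nEE := ipF_self_nonneg E
  set q : ℝ → ℝ := fun t => nBB + 2 * t * nBE + t ^ 2 * nEE with hqdef
  set p : ℝ → ℝ := fun t => nBE + t * nEE with hpdef
  -- q t = ipF (B + t•E) (B + t•E)
  have hqip : ∀ t : ℝ, q t = ipF (B + t • E) (B + t • E) := by
    intro t
    simp only [ipF_add_left, ipF_add_right, ipF_smul_left, ipF_smul_right,
      ipF_comm E B, hqdef]
    ring
  have hpip : ∀ t : ℝ, p t = ipF (B + t • E) E := by
    intro t
    rw [ipF_add_left, ipF_smul_left]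
  have hqnn : ∀ t : ℝ, 0 ≤ q t := by
    intro t; rw [hqip]; exact ipF_self_nonneg _
  -- Cauchy-Schwarz : p t ^ 2 ≤ q t * nEE
  have hcs : ∀ t : ℝ, p t ^ 2 ≤ q t * nEE := by
    intro t; rw [hqip, hpip]; exact ipF_sq_le _ _
  set f : ℝ → ℝ := fun t => μ (q t) * p t with hfdef
  set f' : ℝ → ℝ := fun t => 2 * μ' (q t) * (p t) ^ 2 + μ (q t) * nEE with hf'def
  have hfd : ∀ t : ℝ, HasDerivAt f (f' t) t := by
    intro t
    have hq1 : HasDerivAt (fun u : ℝ => 2 * u * nBE) (2 * nBE) t := by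
      simpa using ((hasDerivAt_id t).const_mul (2:ℝ)).mul_const nBE
    have hq2 : HasDerivAt (fun u : ℝ => u ^ 2 * nEE) (2 * t * nEE) t := by
      have := (hasDerivAt_pow 2 t).mul_const nEE
      simpa [pow_one, mul_comm, mul_assoc] using this
    have hqd : HasDerivAt q (2 * p t) t := by
      have := ((hasDerivAt_const t nBB).add hq1).add hq2
      refine this.congr_deriv ?_
      simp only [hpdef]; ring
    have hμd : HasDerivAt μ (μ' (q t)) (q t) := hder _ (hqnn t)
    have hcomp : HasDerivAt (fun u => μ (q u)) (μ' (q t) * (2 * p t)) t :=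
      hμd.comp t hqd
    have hpd : HasDerivAt p nEE t := by
      exact ((hasDerivAt_const t nBE).add ((hasDerivAt_id t).mul_const nEE)).congr_deriv (by simp)
    have := hcomp.mul hpd
    refine this.congr_deriv ?_
    simp only [hf'def]; ring
  -- pointwise lower bound on f'
  have hlow : ∀ t : ℝ, min ε₁ ε₂ * nEE ≤ f' t := by
    intro t
    have hq := hqnn t
    have hμ1 := h1 (q t) hq
    have hμ2 := h2 (q t) hq
    have hcs' := hcs t
    have hm1 : min ε₁ ε₂ ≤ ε₁ := min_le_left _ _
    have hm2 : min ε₁ ε₂ ≤ ε₂ := min_le_right _ _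
    simp only [hf'def]
    rcases le_or_gt 0 (μ' (q t)) with h | h
    · nlinarith [sq_nonneg (p t)]
    · nlinarith [sq_nonneg (p t)]
  -- MVT
  have hfc : ContinuousOn f (Set.Icc 0 1) :=
    (continuous_iff_continuousAt.2 fun t => (hfd t).continuousAt).continuousOn
  obtain ⟨c, _, hc⟩ := exists_hasDerivAt_eq_slope f f' zero_lt_one hfc
      (fun x _ => hfd x)
  have hslope : f 1 - f 0 = f' c := by
    rw [hc]; ring
  -- identify both sides
  have hq1A : q 1 = ipF A A := by
    rw [hqip]
    have : B + (1:ℝ) • E = A := by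
      simp [hE]
    rw [this]
  have hp1A : p 1 = ipF A E := by
    rw [hpip]
    have : B + (1:ℝ) • E = A := by
      simp [hE]
    rw [this]
  have hq0 : q 0 = nBB := by simp [hqdef]
  have hp0 : p 0 = nBE := by simp [hpdef]
  have hRHS : ipF (μ ((nF A) ^ 2) • A - μ ((nF B) ^ 2) • B) E = f 1 - f 0 := by
    rw [ipF_sub_left, ipF_smul_left, ipF_smul_left, nF_sq, nF_sq]
    simp only [hfdef, hq1A, hp1A, hq0, hp0, hnBB, hnBE]
  rw [hRHS, hslope, nF_sq]
  exact hlow c
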